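/- For any n ≥ 0 and any multi-index (ν_0, ν_1, …, ν_n) ∈ ℕ^{n+1}, the Lebesgue integral over the set Δ'_n = { x ∈ ℝ^n : x_i ≥ 0 for all i, and ∑_{i=1}^n x_i ≤ 1 } satisfies ∫_{Δ'_n} (1 − ∑_{i=1}^n x_i)^{ν_0} · ∏_{i=1}^n x_i^{ν_i} dx_1⋯dx_n = (∏_{i=0}^n ν_i!)/(n + ∑_{i=0}^n ν_i)!. -/

import Mathlib

open MeasureTheory

/-- auxiliary product identity -/
lemma prod_range_fact (a b : ℕ) :
    (a.factorial : ℕ) * ∏ j ∈ Finset.range (b + 1), (a + 1 + j) = (a + b + 1).factorial := by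
  induction b with
  | zero => simp [Nat.factorial_succ, Nat.mul_comm]
  | succ b ih =>
      rw [Finset.prod_range_succ, ← Nat.mul_assoc, ih]
      rw [show a + (b + 1) + 1 = (a + b + 1) + 1 by ring, Nat.factorial_succ (a + b + 1)]
      ring

/-- Euler Beta integral with natural exponents. -/
lemma beta_nat (a b : ℕ) :
    ∫ x in (0:ℝ)..1, x ^ a * (1 - x) ^ b
      = (a.factorial * b.factorial : ℝ) / ((a + b + 1).factorial) := by
  have h := Complex.betaIntegral_eval_nat_add_one_right (u := (a : ℂ) + 1) (by simp; positivity) b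
  rw [Complex.betaIntegral] at h
  have h2 : ∀ x : ℝ, (x:ℂ) ^ ((a:ℂ) + 1 - 1) * ((1:ℂ) - (x:ℂ)) ^ ((b:ℂ) + 1 - 1)
      = ((x ^ a * (1 - x) ^ b : ℝ) : ℂ) := by
    intro x
    rw [show (a:ℂ) + 1 - 1 = ((a:ℕ):ℂ) by ring, show (b:ℂ) + 1 - 1 = ((b:ℕ):ℂ) by ring,
      Complex.cpow_natCast, Complex.cpow_natCast]
    push_cast
    ring
  simp only [h2] at h
  rw [intervalIntegral.integral_ofReal] at h
  have hP : (∏ j ∈ Finset.range (b + 1), ((a:ℂ) + 1 + (j:ℕ)))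
      = ((∏ j ∈ Finset.range (b + 1), (a + 1 + j) : ℕ) : ℂ) := by
    push_cast
    ring
  rw [hP] at h
  have := prod_range_fact a b
  have hane : ((a.factorial : ℕ) : ℂ) ≠ 0 := by exact_mod_cast a.factorial_ne_zero
  have key : ((∫ x in (0:ℝ)..1, x ^ a * (1 - x) ^ b : ℝ) : ℂ)
      = ((a.factorial * b.factorial : ℝ) / ((a + b + 1).factorial : ℝ) : ℝ) := by
    rw [h]
    push_cast [← this]
    rw [mul_div_mul_left _ _ hane]
  exact_mod_cast key

lemma simplex_isClosed (m : ℕ) :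
    IsClosed {x : Fin m → ℝ | (∀ i, 0 ≤ x i) ∧ ∑ i, x i ≤ 1} := by
  have h1 : IsClosed {x : Fin m → ℝ | ∀ i, 0 ≤ x i} := by
    have : {x : Fin m → ℝ | ∀ i, 0 ≤ x i} = ⋂ i, {x | 0 ≤ x i} := by
      ext x; simp
    rw [this]
    exact isClosed_iInter fun i => isClosed_le continuous_const (continuous_apply i)
  have h2 : IsClosed {x : Fin m → ℝ | ∑ i, x i ≤ 1} :=
    isClosed_le (by fun_prop) continuous_const
  exact h1.inter h2

lemma simplex_isCompact (m : ℕ) :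
    IsCompact {x : Fin m → ℝ | (∀ i, 0 ≤ x i) ∧ ∑ i, x i ≤ 1} := by
  refine IsCompact.of_isClosed_subset (isCompact_Icc (a := (0 : Fin m → ℝ)) (b := 1))
    (simplex_isClosed m) ?_
  intro x hx
  obtain ⟨h0, h1⟩ := hx
  refine ⟨h0, fun i => ?_⟩
  calc x i ≤ ∑ j, x j := Finset.single_le_sum (fun j _ => h0 j) (Finset.mem_univ i)
  _ ≤ 1 := h1

lemma simplex_integrableOn (m : ℕ) (k : ℕ) (κ : Fin m → ℕ) :
    IntegrableOn (fun x : Fin m → ℝ => (1 - ∑ i, x i) ^ k * ∏ i, x i ^ κ i)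
      {x : Fin m → ℝ | (∀ i, 0 ≤ x i) ∧ ∑ i, x i ≤ 1} := by
  apply ContinuousOn.integrableOn_compact (simplex_isCompact m)
  apply Continuous.continuousOn
  fun_prop

theorem integral_monomial_simplex (n : ℕ) (ν : Fin (n + 1) → ℕ) :
    ∫ x in {x : Fin n → ℝ | (∀ i, 0 ≤ x i) ∧ ∑ i, x i ≤ 1},
        (1 - ∑ i, x i) ^ ν 0 * ∏ i : Fin n, x i ^ ν i.succ =
      ((∏ i, Nat.factorial (ν i) : ℕ) : ℝ) /
        ((Nat.factorial (n + ∑ i, ν i) : ℕ) : ℝ) := by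
  induction n with
  | zero =>
      have hset : {x : Fin 0 → ℝ | (∀ i, 0 ≤ x i) ∧ ∑ i, x i ≤ 1} = Set.univ := by
        ext x
        simp
      rw [hset]
      simp [Fin.sum_univ_one, Fin.prod_univ_one, Measure.restrict_univ]
      rw [div_self (by exact_mod_cast (ν 0).factorial_ne_zero)]
      have : (volume : Measure (Fin 0 → ℝ)) Set.univ = 1 := by
        rw [MeasureTheory.volume_pi, Measure.pi_univ]
        simp
      rw [measureReal_def, this]
      simp
  | succ n ih =>
      classical
      set μf : Fin n → ℕ := fun i => ν i.succ.succ with hμf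
      set κ : Fin (n + 1) → ℕ := Fin.cons (ν 0) μf with hκ
      set E : ℕ := n + (ν 0 + ∑ i, μf i) with hE
      set C : ℝ := ((∏ j, (κ j).factorial : ℕ) : ℝ) / ((Nat.factorial (n + ∑ j, κ j) : ℕ) : ℝ)
        with hC
      set F : ℝ × (Fin n → ℝ) → ℝ := fun p =>
        if 0 ≤ p.1 ∧ (∀ i, 0 ≤ p.2 i) ∧ p.1 + ∑ i, p.2 i ≤ 1
          then p.1 ^ ν 1 * ((1 - p.1 - ∑ i, p.2 i) ^ ν 0 * ∏ i, p.2 i ^ μf i) else 0 with hF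
      set G : ℝ → (Fin n → ℝ) → ℝ := fun s y =>
        if (∀ i, 0 ≤ y i) ∧ ∑ i, y i ≤ s
          then (s - ∑ i, y i) ^ ν 0 * ∏ i, y i ^ μf i else 0 with hG
      -- pointwise identification with the product space
      have hFe : ∀ x : Fin (n + 1) → ℝ,
          Set.indicator {x : Fin (n + 1) → ℝ | (∀ i, 0 ≤ x i) ∧ ∑ i, x i ≤ 1}
            (fun x => (1 - ∑ i, x i) ^ ν 0 * ∏ i, x i ^ ν i.succ) x
          = F (x 0, fun j => x j.succ) := by
        intro x
        rw [Set.indicator_apply]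
        simp only [Set.mem_setOf_eq, hF, hμf]
        have hiff : ((∀ i : Fin (n + 1), 0 ≤ x i) ∧ ∑ i : Fin (n + 1), x i ≤ 1)
            ↔ (0 ≤ x 0 ∧ (∀ i : Fin n, 0 ≤ x i.succ)
                ∧ x 0 + ∑ j : Fin n, x j.succ ≤ 1) := by
          simp only [Fin.forall_fin_succ, Fin.sum_univ_succ]
          tauto
        have hval : (1 - ∑ i : Fin (n + 1), x i) ^ ν 0 * ∏ i : Fin (n + 1), x i ^ ν i.succ
            = x 0 ^ ν 1 * ((1 - x 0 - ∑ j : Fin n, x j.succ) ^ ν 0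
                * ∏ j : Fin n, x j.succ ^ ν j.succ.succ) := by
          rw [Fin.sum_univ_succ, Fin.prod_univ_succ]
          simp only [Fin.succ_zero_eq_one]
          ring
        exact if_congr hiff hval rfl
      have hSmeas : MeasurableSet {x : Fin (n + 1) → ℝ | (∀ i, 0 ≤ x i) ∧ ∑ i, x i ≤ 1} :=
        (simplex_isClosed (n + 1)).measurableSet
      have hvp := MeasureTheory.volume_preserving_piFinSuccAbove (fun _ : Fin (n + 1) => ℝ) 0
      have heapp : ∀ x : Fin (n + 1) → ℝ,
          (MeasurableEquiv.piFinSuccAbove (fun _ : Fin (n + 1) => ℝ) 0) x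
            = (x 0, fun j => x j.succ) := by
        intro x
        simp [MeasurableEquiv.piFinSuccAbove_apply]
        rfl
      have stepA : (∫ x in {x : Fin (n + 1) → ℝ | (∀ i, 0 ≤ x i) ∧ ∑ i, x i ≤ 1},
            (1 - ∑ i, x i) ^ ν 0 * ∏ i, x i ^ ν i.succ)
          = ∫ p, F p ∂((volume : Measure ℝ).prod (volume : Measure (Fin n → ℝ))) := by
        rw [← MeasureTheory.integral_indicator hSmeas, ← MeasureTheory.Measure.volume_eq_prod,
          ← hvp.integral_comp (MeasurableEquiv.measurableEmbedding _) F]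
        refine integral_congr_ae (Filter.Eventually.of_forall fun x => ?_)
        simp only []
        rw [heapp x]
        exact hFe x
      have hIntOn := simplex_integrableOn (n + 1) (ν 0) (fun i : Fin (n + 1) => ν i.succ)
      have hInt : Integrable F ((volume : Measure ℝ).prod (volume : Measure (Fin n → ℝ))) := by
        rw [← MeasureTheory.Measure.volume_eq_prod,
          ← hvp.integrable_comp_emb (MeasurableEquiv.measurableEmbedding _)]
        have : F ∘ (MeasurableEquiv.piFinSuccAbove (fun _ : Fin (n + 1) => ℝ) 0)
            = Set.indicator {x : Fin (n + 1) → ℝ | (∀ i, 0 ≤ x i) ∧ ∑ i, x i ≤ 1}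
              (fun x => (1 - ∑ i, x i) ^ ν 0 * ∏ i, x i ^ ν i.succ) := by
          funext x
          rw [Function.comp_apply, heapp x, hFe x]
        rw [this, integrable_indicator_iff hSmeas]
        exact hIntOn
      -- value of the inner integral at scale 1
      have hG1 : ∫ y, G 1 y = C := by
        have hrepr : (fun y => G 1 y)
            = Set.indicator {y : Fin n → ℝ | (∀ i, 0 ≤ y i) ∧ ∑ i, y i ≤ 1}
              (fun y => (1 - ∑ i, y i) ^ ν 0 * ∏ i, y i ^ μf i) := by
          funext y
          rw [Set.indicator_apply]
          simp only [hG, Set.mem_setOf_eq]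
        rw [hrepr, MeasureTheory.integral_indicator (simplex_isClosed n).measurableSet]
        have hih := ih κ
        simp only [hκ, Fin.cons_zero, Fin.cons_succ] at hih
        rw [hC, hκ, ← hih]
      -- scaling
      have hGs : ∀ s : ℝ, 0 < s → ∫ y, G s y = s ^ E * C := by
        intro s hs
        have h1 : ∀ z : Fin n → ℝ, G s (s • z) = s ^ (ν 0 + ∑ i, μf i) * G 1 z := by
          intro z
          simp only [hG, Pi.smul_apply, smul_eq_mul, ← Finset.mul_sum]
          have hprodz : ∏ i, (s * z i) ^ μf i = s ^ (∑ i, μf i) * ∏ i, z i ^ μf i := by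
            rw [← Finset.prod_pow_eq_pow_sum, ← Finset.prod_mul_distrib]
            exact Finset.prod_congr rfl fun i _ => mul_pow s (z i) (μf i)
          by_cases hz : (∀ i, 0 ≤ z i) ∧ ∑ i, z i ≤ 1
          · rw [if_pos ?_, if_pos hz]
            · rw [show s - s * ∑ i, z i = s * (1 - ∑ i, z i) by ring, mul_pow, hprodz]
              ring
            · refine ⟨fun i => mul_nonneg hs.le (hz.1 i), ?_⟩
              calc s * ∑ i, z i ≤ s * 1 := by nlinarith [hz.2]
              _ = s := mul_one s
          · rw [if_neg ?_, if_neg hz, mul_zero]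
            intro hcon
            apply hz
            refine ⟨fun i => by nlinarith [hcon.1 i], ?_⟩
            nlinarith [hcon.2]
        have h2 := MeasureTheory.Measure.integral_comp_smul (volume : Measure (Fin n → ℝ)) (G s) s
        simp only [h1, Module.finrank_fin_fun, smul_eq_mul] at h2
        rw [MeasureTheory.integral_const_mul, hG1] at h2
        have hsn : (0:ℝ) < s ^ n := pow_pos hs n
        rw [abs_of_pos (by positivity)] at h2
        rw [hE, pow_add]
        field_simp at h2
        linarith [h2]
      -- the inner integral as a function of t
      have hInner : ∀ t : ℝ, t ∉ ({0, 1} : Set ℝ) →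
          (∫ y, F (t, y))
            = Set.indicator (Set.Ioo (0:ℝ) 1) (fun t => t ^ ν 1 * ((1 - t) ^ E * C)) t := by
        intro t ht
        simp only [Set.mem_insert_iff, Set.mem_singleton_iff, not_or] at ht
        rcases lt_or_gt_of_ne ht.1 with h0 | h0
        · rw [Set.indicator_of_notMem (by intro hmem; exact absurd hmem.1 (not_lt.2 h0.le))]
          have hzero : ∀ y : Fin n → ℝ, F (t, y) = 0 := by
            intro y
            exact if_neg fun hc => absurd hc.1 (not_le.2 h0)
          simp [hzero]
        · rcases lt_or_gt_of_ne ht.2 with h1 | h1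
          · rw [Set.indicator_of_mem (Set.mem_Ioo.mpr ⟨h0, h1⟩)]
            have hFt : ∀ y : Fin n → ℝ, F (t, y) = t ^ ν 1 * G (1 - t) y := by
              intro y
              simp only [hF, hG]
              rw [mul_ite, mul_zero]
              refine if_congr ?_ (by ring) rfl
              constructor
              · rintro ⟨-, hy, hsum⟩
                exact ⟨hy, by linarith⟩
              · rintro ⟨hy, hsum⟩
                exact ⟨h0.le, hy, by linarith⟩
            simp only [hFt]
            rw [MeasureTheory.integral_const_mul, hGs (1 - t) (by linarith)]
          · rw [Set.indicator_of_notMem (by intro hmem; exact absurd hmem.2 (not_lt.2 h1.le))]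
            have hzero : ∀ y : Fin n → ℝ, F (t, y) = 0 := by
              intro y
              refine if_neg fun hc => ?_
              have h2 : (0:ℝ) ≤ ∑ i, y i := Finset.sum_nonneg fun i _ => hc.2.1 i
              linarith [hc.2.2]
            simp [hzero]
      have hnull : (volume : Measure ℝ) ({0, 1} : Set ℝ) = 0 :=
        ((Set.finite_singleton (1:ℝ)).insert 0).measure_zero _
      have hAE : ∀ᵐ t : ℝ, (∫ y, F (t, y))
          = Set.indicator (Set.Ioo (0:ℝ) 1) (fun t => t ^ ν 1 * ((1 - t) ^ E * C)) t := by
        filter_upwards [measure_eq_zero_iff_ae_notMem.mp hnull] with t ht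
        exact hInner t ht
      rw [stepA, MeasureTheory.integral_prod F hInt, integral_congr_ae hAE,
        MeasureTheory.integral_indicator measurableSet_Ioo,
        ← MeasureTheory.integral_Ioc_eq_integral_Ioo,
        ← intervalIntegral.integral_of_le zero_le_one]
      simp only [← mul_assoc]
      rw [intervalIntegral.integral_mul_const, beta_nat (ν 1) E]
      -- final arithmetic
      have hEκ : n + ∑ j, κ j = E := by
        rw [hκ, hE, Fin.sum_univ_succ]
        simp [Fin.cons_zero, Fin.cons_succ]
      have hprodfac : (∏ i : Fin (n + 2), (ν i).factorial)
          = (ν 1).factorial * ∏ j, (κ j).factorial := by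
        rw [hκ]
        rw [Fin.prod_univ_succ (f := fun i : Fin (n + 2) => (ν i).factorial),
          Fin.prod_univ_succ (f := fun i : Fin (n + 1) => (ν i.succ).factorial),
          Fin.prod_univ_succ (f := fun j : Fin (n + 1) => ((Fin.cons (ν 0) μf : Fin (n+1) → ℕ) j).factorial)]
        simp only [Fin.cons_zero, Fin.cons_succ, Fin.succ_zero_eq_one, hμf]
        ring
      have hsumfac : n + 1 + ∑ i : Fin (n + 2), ν i = ν 1 + E + 1 := by
        rw [hE, Fin.sum_univ_succ (f := fun i : Fin (n + 2) => ν i),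
          Fin.sum_univ_succ (f := fun i : Fin (n + 1) => ν i.succ)]
        simp only [Fin.succ_zero_eq_one, hμf]
        omega
      rw [hC, hEκ, hprodfac, hsumfac]
      have hfac1 : ((E.factorial : ℕ) : ℝ) ≠ 0 := by exact_mod_cast E.factorial_ne_zero
      have hfac2 : (((ν 1 + E + 1).factorial : ℕ) : ℝ) ≠ 0 := by
        exact_mod_cast (ν 1 + E + 1).factorial_ne_zero
      push_cast
      field_simp
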